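/- Let A' be a central hyperplane arrangement in K^ℓ (char K = 0), H a hyperplane not in A', and A = A' ∪ {H}. If |A^H| ≤ |A'| − d for some positive integer d, then every set of homogeneous generators of the logarithmic derivation module D(A') contains an element of degree at least d. -/

import Mathlib

open MvPolynomial

/-- The polynomial ring `S = K[x_1, ..., x_ℓ]`. -/
abbrev MvS (K : Type*) [Field K] (ℓ : ℕ) := MvPolynomial (Fin ℓ) K

variable {K : Type*} [Field K] {ℓ : ℕ}

/-- The linear functional on `K^ℓ` with coefficient vector `c`. -/
noncomputable def ellf (c : Fin ℓ → K) : (Fin ℓ → K) →ₗ[K] K :=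
  ∑ i, c i • LinearMap.proj i

/-- The hyperplane (through the origin) with coefficient vector `c`. -/
noncomputable def hypl (c : Fin ℓ → K) : Submodule K (Fin ℓ → K) :=
  LinearMap.ker (ellf c)

/-- The degree-one defining form `α = ∑ c_i x_i` of the hyperplane with coefficients `c`. -/
noncomputable def linForm (c : Fin ℓ → K) : MvS K ℓ := ∑ i, C (c i) * X i

/-- The defining polynomial `Q(A) = ∏_{H ∈ A} α_H` of an arrangement given by a finite
set of coefficient vectors. -/
noncomputable def Qpoly (A : Finset (Fin ℓ → K)) : MvS K ℓ := ∏ c ∈ A, linForm c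

/-- The module of logarithmic derivations of a reduced defining polynomial `Q`:
derivations `θ = ∑ θ_i ∂_i` (identified with their coefficient tuples) with `θ(Q) ∈ Q·S`. -/
def DerQ {K : Type*} [Field K] {ℓ : ℕ} (Q : MvS K ℓ) : Set (Fin ℓ → MvS K ℓ) :=
  {θ | Q ∣ ∑ i, θ i * pderiv i Q}

/-- The logarithmic derivation module `D(A)` of an arrangement. -/
noncomputable def DerA (A : Finset (Fin ℓ → K)) : Set (Fin ℓ → MvS K ℓ) :=
  DerQ (Qpoly A)

/-- A derivation is homogeneous of degree `d` if all of its coefficient polynomials are. -/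
def IsHomog {K : Type*} [Field K] {ℓ : ℕ} (θ : Fin ℓ → MvS K ℓ) (d : ℕ) : Prop :=
  ∀ i, (θ i).IsHomogeneous d

/-- A finite set of coefficient vectors honestly represents a central arrangement:
all forms are nonzero and no two define the same hyperplane. -/
def IsArrangement (A : Finset (Fin ℓ → K)) : Prop :=
  (∀ c ∈ A, c ≠ 0) ∧ ∀ c ∈ A, ∀ c' ∈ A, hypl c = hypl c' → c = c'

/-- `|(A ∪ {H})^H|`, the number of distinct intersections `H' ∩ H` for `H' ∈ A`. -/
noncomputable def restrictCount (A : Finset (Fin ℓ → K)) (h : Fin ℓ → K) : ℕ :=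
  letI := Classical.decEq (Submodule K (Fin ℓ → K))
  (A.image fun c => hypl c ⊓ hypl h).card

/-- `h` defines a genuine hyperplane that does not belong to the arrangement `A`. -/
def NotInArr (A : Finset (Fin ℓ → K)) (h : Fin ℓ → K) : Prop :=
  h ≠ 0 ∧ ∀ c ∈ A, hypl c ≠ hypl h

/-- `G` is a set of generators of `D(A)` as an `S`-module. -/
def Generates (A : Finset (Fin ℓ → K)) (G : Set (Fin ℓ → MvS K ℓ)) : Prop :=
  (∀ θ ∈ G, θ ∈ DerA A) ∧ ∀ θ ∈ DerA A, θ ∈ Submodule.span (MvS K ℓ) G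

/-- `G` is a minimal set of generators of `D(A)`. -/
def IsMinGen (A : Finset (Fin ℓ → K)) (G : Set (Fin ℓ → MvS K ℓ)) : Prop :=
  Generates A G ∧ ∀ G' ⊂ G, ¬ Generates A G'

/-- Every member of `G` is a nonzero homogeneous derivation. -/
def HomogGens {K : Type*} [Field K] {ℓ : ℕ} (G : Set (Fin ℓ → MvS K ℓ)) : Prop :=
  ∀ θ ∈ G, θ ≠ 0 ∧ ∃ d, IsHomog θ d

/-- `d` is the maximal degree occurring among the (nonzero homogeneous) members of `G`. -/
def MaxDeg {K : Type*} [Field K] {ℓ : ℕ} (G : Set (Fin ℓ → MvS K ℓ)) (d : ℕ) : Prop :=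
  (∀ θ ∈ G, ∀ e, IsHomog θ e → e ≤ d) ∧ ∃ θ ∈ G, IsHomog θ d

/-- The minimal restriction number `t_A`. -/
noncomputable def tA (A : Finset (Fin ℓ → K)) : ℕ :=
  sInf {n | ∃ h : Fin ℓ → K, NotInArr A h ∧ n = restrictCount A h}

/-- The intersection `∩_{c ∈ B} H_c` of the hyperplanes of `B`. -/
noncomputable def interSub (B : Finset (Fin ℓ → K)) : Submodule K (Fin ℓ → K) :=
  ⨅ c ∈ B, hypl c

/-- The characteristic polynomial of a central arrangement, via Whitney's formula
`χ(A,t) = ∑_{B ⊆ A} (-1)^{|B|} t^{dim ∩B}`. -/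
noncomputable def charPolyA (A : Finset (Fin ℓ → K)) : Polynomial ℤ :=
  ∑ B ∈ A.powerset,
    ((-1 : Polynomial ℤ) ^ B.card) * Polynomial.X ^ (Module.finrank K (interSub B))

/-- `D(Q)` is a free `S`-module with a homogeneous basis of degrees `e 0, ..., e (ℓ-1)`. -/
def IsFreeQWithExp {K : Type*} [Field K] {ℓ : ℕ} (Q : MvS K ℓ) (e : Fin ℓ → ℕ) : Prop :=
  ∃ θ : Fin ℓ → (Fin ℓ → MvS K ℓ),
    (∀ i, θ i ∈ DerQ Q ∧ θ i ≠ 0 ∧ IsHomog (θ i) (e i)) ∧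
    LinearIndependent (MvS K ℓ) θ ∧
    ∀ φ ∈ DerQ Q, φ ∈ Submodule.span (MvS K ℓ) (Set.range θ)

/-- `D(Q)` is a free `S`-module. -/
def IsFreeQ {K : Type*} [Field K] {ℓ : ℕ} (Q : MvS K ℓ) : Prop :=
  ∃ e, IsFreeQWithExp Q e

/-- The arrangement `A` is free. -/
noncomputable def IsFreeArr (A : Finset (Fin ℓ → K)) : Prop := IsFreeQ (Qpoly A)

/-- The rank of a set of hyperplanes: the codimension of their common intersection,
i.e. the dimension of the span of their defining functionals. -/
noncomputable def rkSet (s : Set (Fin ℓ → K)) : ℕ :=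
  Module.finrank K (Submodule.span K s)

/-- The Euler derivation `θ_E = ∑ x_i ∂_i`. -/
noncomputable def eulerDer (K : Type*) [Field K] (ℓ : ℕ) : Fin ℓ → MvS K ℓ :=
  fun i => X i

/-- `B` is solvable in `A` (Jambu–Papadima). -/
def Solvable (B A : Finset (Fin ℓ → K)) : Prop :=
  B ⊆ A ∧
  (∀ α ∈ B, ∀ β ∈ B, α ≠ β → ∀ a ∈ A, a ∉ B → rkSet {α, β, a} = 3) ∧
  (∀ a ∈ A, a ∉ B → ∀ b ∈ A, b ∉ B → a ≠ b → ∃ α ∈ B, rkSet {a, b, α} = 2) ∧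
  (∀ a ∈ A, a ∉ B → ∀ b ∈ A, b ∉ B → ∀ c ∈ A, c ∉ B →
    a ≠ b → a ≠ c → b ≠ c →
    ∀ α ∈ B, ∀ β ∈ B, ∀ γ ∈ B,
      rkSet {a, b, α} = 2 → rkSet {a, c, β} = 2 → rkSet {b, c, γ} = 2 →
      rkSet {α, β, γ} ≤ 2)

/-- The hyperplane `{x_i = x_j}` of a graphic arrangement. -/
noncomputable def edgeHyp (K : Type*) [Field K] {ℓ : ℕ} (i j : Fin ℓ) :
    Submodule K (Fin ℓ → K) :=
  LinearMap.ker ((LinearMap.proj (R := K) (φ := fun _ : Fin ℓ => K) i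
    - LinearMap.proj (R := K) (φ := fun _ : Fin ℓ => K) j))

/-- The coefficient vector of the form `x_i - x_j`. -/
def eform (K : Type*) [Field K] {ℓ : ℕ} (i j : Fin ℓ) : Fin ℓ → K :=
  fun t => if t = i then 1 else if t = j then -1 else 0

/-- The set of defining forms of the graphic arrangement `A_G`. -/
noncomputable def graphForms (K : Type*) [Field K] {ℓ : ℕ} (G : SimpleGraph (Fin ℓ)) :
    Finset (Fin ℓ → K) :=
  letI := Classical.decEq (Fin ℓ → K)
  letI : DecidablePred (fun p : Fin ℓ × Fin ℓ => G.Adj p.1 p.2 ∧ p.1 < p.2) :=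
    fun _ => Classical.propDecidable _
  Finset.image (fun p : Fin ℓ × Fin ℓ => eform K p.1 p.2)
    (Finset.univ.filter fun p : Fin ℓ × Fin ℓ => G.Adj p.1 p.2 ∧ p.1 < p.2)

/-- `Tri(G)`: the maximal number of new triangles created by adding a single edge. -/
noncomputable def TriG {ℓ : ℕ} (G : SimpleGraph (Fin ℓ)) : ℕ :=
  sSup {n | ∃ u v : Fin ℓ, u ≠ v ∧ ¬ G.Adj u v ∧
    n = {w | G.Adj u w ∧ G.Adj v w}.ncard}
section Aux
variable {K : Type*} [Field K]

noncomputable def lfg {σ : Type*} [Fintype σ] (c : σ → K) : MvPolynomial σ K :=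
  ∑ i, C (c i) * X i


lemma eval_lfg {σ : Type*} [Fintype σ] (c : σ → K) (x : σ → K) :
    eval x (lfg c) = ∑ i, c i * x i := by
  simp [lfg]

lemma lfg_eq_zero_iff {σ : Type*} [Fintype σ] [DecidableEq σ] (c : σ → K) :
    lfg c = 0 ↔ c = 0 := by
  constructor
  · intro h
    funext i
    have := congrArg (eval (Pi.single i 1)) h
    rw [eval_lfg] at this
    simpa [Pi.single_apply, Finset.sum_ite_eq'] using this
  · rintro rfl; simp [lfg]

lemma lfg_isHomogeneous {σ : Type*} [Fintype σ] (c : σ → K) :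
    (lfg c).IsHomogeneous 1 := by
  apply MvPolynomial.IsHomogeneous.sum
  intro i _
  exact MvPolynomial.isHomogeneous_C_mul_X _ _

/-- The "restriction to the hyperplane of c" map, killing `lfg c`, where `c j ≠ 0`. -/
noncomputable def resAlg {σ : Type*} [Fintype σ] [DecidableEq σ] (c : σ → K) (j : σ) :
    MvPolynomial σ K →ₐ[K] MvPolynomial {i : σ // i ≠ j} K :=
  aeval (fun i => if h : i ≠ j then X (⟨i, h⟩ : {i : σ // i ≠ j})
    else C (-(c j)⁻¹) * ∑ i' : {i : σ // i ≠ j}, C (c i'.1) * X i')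

lemma sum_split_j {σ : Type*} [Fintype σ] [DecidableEq σ] (j : σ) {M : Type*}
    [AddCommMonoid M] (f : σ → M) :
    ∑ i, f i = f j + ∑ i' : {i : σ // i ≠ j}, f i'.1 := by
  rw [← Finset.sum_subtype (Finset.univ.erase j) (by simp) f]
  rw [← Finset.add_sum_erase _ f (Finset.mem_univ j)]

lemma resAlg_lfg {σ : Type*} [Fintype σ] [DecidableEq σ] (c : σ → K) (j : σ)
    (hcj : c j ≠ 0) (v : σ → K) :
    resAlg c j (lfg v) =
      lfg (fun i' : {i : σ // i ≠ j} => v i'.1 - v j * (c j)⁻¹ * c i'.1) := by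
  rw [lfg, sum_split_j j (fun i => C (v i) * X i), map_add, map_sum, lfg]
  have h1 : resAlg c j (C (v j) * X j)
      = C (v j) * (C (-(c j)⁻¹) * ∑ i' : {i : σ // i ≠ j}, C (c i'.1) * X i') := by
    rw [map_mul]
    simp only [resAlg, aeval_C, aeval_X, algebraMap_eq, dif_neg (not_not_intro rfl)]
  have h2 : ∀ i' : {i : σ // i ≠ j}, resAlg c j (C (v i'.1) * X i'.1)
      = C (v i'.1) * X i' := by
    intro i'
    rw [map_mul]
    simp only [resAlg, aeval_C, aeval_X, algebraMap_eq, dif_pos i'.2, Subtype.eta]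
  rw [h1]
  simp only [h2]
  rw [Finset.mul_sum, Finset.mul_sum, ← Finset.sum_add_distrib]
  apply Finset.sum_congr rfl
  intro i' _
  rw [← mul_assoc, ← mul_assoc, ← C_mul, ← C_mul, ← add_mul, ← C_add]
  congr 1
  ring

lemma resAlg_C {σ : Type*} [Fintype σ] [DecidableEq σ] (c : σ → K) (j : σ) (a : K) :
    resAlg c j (C a) = C a := by
  simp [resAlg, algebraMap_eq]

lemma resAlg_lfg_self {σ : Type*} [Fintype σ] [DecidableEq σ] (c : σ → K) (j : σ)
    (hcj : c j ≠ 0) : resAlg c j (lfg c) = 0 := by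
  rw [resAlg_lfg c j hcj c]
  have : (fun i' : {i : σ // i ≠ j} => c i'.1 - c j * (c j)⁻¹ * c i'.1) = fun _ => 0 := by
    funext i'; rw [mul_inv_cancel₀ hcj, one_mul, sub_self]
  rw [this]
  simp [lfg]

noncomputable def secAlg {σ : Type*} [Fintype σ] [DecidableEq σ] (j : σ) :
    MvPolynomial {i : σ // i ≠ j} K →ₐ[K] MvPolynomial σ K :=
  aeval (fun i' => X i'.1)

lemma lfg_dvd_sub_sec {σ : Type*} [Fintype σ] [DecidableEq σ] (c : σ → K) (j : σ)
    (hcj : c j ≠ 0) (f : MvPolynomial σ K) :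
    lfg c ∣ f - secAlg j (resAlg c j f) := by
  induction f using MvPolynomial.induction_on with
  | C a =>
      rw [resAlg_C, secAlg, aeval_C, algebraMap_eq, sub_self]
      exact dvd_zero _
  | add f g hf hg =>
      have : f + g - secAlg j (resAlg c j (f + g))
          = (f - secAlg j (resAlg c j f)) + (g - secAlg j (resAlg c j g)) := by
        rw [map_add, map_add]; ring
      rw [this]; exact dvd_add hf hg
  | mul_X f i hf =>
      have key : lfg c ∣ X i - secAlg j (resAlg c j (X i)) := by
        by_cases hij : i = j
        case neg =>
          simp only [resAlg, aeval_X, dif_pos hij, secAlg, aeval_X, sub_self, dvd_zero]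
        case pos =>
          rw [hij]
          have : secAlg (K := K) j (resAlg c j (X j))
              = C (-(c j)⁻¹) * ∑ i' : {i : σ // i ≠ j}, C (c i'.1) * X i'.1 := by
            simp only [resAlg, aeval_X, dif_neg (not_not_intro rfl)]
            rw [map_mul, secAlg, aeval_C, algebraMap_eq, map_sum]
            congr 1
            apply Finset.sum_congr rfl
            intro i' _
            rw [map_mul, aeval_C, aeval_X, algebraMap_eq]
          rw [this]
          refine ⟨C (c j)⁻¹, ?_⟩
          rw [lfg, sum_split_j j (fun i => C (c i) * X i), add_mul]
          rw [Finset.sum_mul, Finset.mul_sum, neg_inv]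
          have hXj : C (c j) * X j * C (c j)⁻¹ = X j := by
            rw [mul_comm, ← mul_assoc, ← C_mul, inv_mul_cancel₀ hcj, C_1, one_mul]
          rw [hXj, sub_eq_add_neg]
          congr 1
          rw [← Finset.sum_neg_distrib]
          exact Finset.sum_congr rfl (fun _ _ => by rw [inv_neg, C_neg]; ring)
      have : f * X i - secAlg j (resAlg c j (f * X i))
          = f * (X i - secAlg j (resAlg c j (X i)))
            + (f - secAlg j (resAlg c j f)) * secAlg j (resAlg c j (X i)) := by
        rw [map_mul, map_mul]; ring
      rw [this]
      exact dvd_add (Dvd.dvd.mul_left key f) (hf.mul_right _)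

lemma lfg_dvd_iff {σ : Type*} [Fintype σ] [DecidableEq σ] (c : σ → K) (j : σ)
    (hcj : c j ≠ 0) (f : MvPolynomial σ K) :
    lfg c ∣ f ↔ resAlg c j f = 0 := by
  constructor
  · rintro ⟨g, rfl⟩
    rw [map_mul, resAlg_lfg_self c j hcj, zero_mul]
  · intro h
    have := lfg_dvd_sub_sec c j hcj f
    rw [h, map_zero, sub_zero] at this
    exact this

lemma lfg_prime {σ : Type*} [Fintype σ] [DecidableEq σ] {c : σ → K} (hc : c ≠ 0) :
    Prime (lfg c) := by
  obtain ⟨j, hcj⟩ : ∃ j, c j ≠ 0 := by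
    by_contra hj; push_neg at hj; exact hc (funext hj)
  refine ⟨?_, ?_, ?_⟩
  · rw [Ne, lfg_eq_zero_iff]; exact hc
  · intro hu
    have h1 : lfg c ∣ (1 : MvPolynomial σ K) := hu.dvd
    rw [lfg_dvd_iff c j hcj, map_one] at h1
    exact one_ne_zero h1
  · intro a b hab
    rw [lfg_dvd_iff c j hcj, map_mul, mul_eq_zero] at hab
    rcases hab with h | h
    · exact Or.inl ((lfg_dvd_iff c j hcj a).mpr h)
    · exact Or.inr ((lfg_dvd_iff c j hcj b).mpr h)

lemma lfg_smul_sub (t : K) {σ : Type*} [Fintype σ] (v w : σ → K) :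
    lfg (v - t • w) = lfg v - C t * lfg w := by
  rw [lfg, lfg, lfg, Finset.mul_sum, ← Finset.sum_sub_distrib]
  apply Finset.sum_congr rfl
  intro i _
  simp only [Pi.sub_apply, Pi.smul_apply, smul_eq_mul, C_sub, C_mul]
  ring

lemma lfg_dvd_lfg {σ : Type*} [Fintype σ] [DecidableEq σ] {c v : σ → K} (hc : c ≠ 0)
    (hdvd : lfg c ∣ lfg v) : ∃ t : K, v = t • c := by
  obtain ⟨j, hcj⟩ : ∃ j, c j ≠ 0 := by
    by_contra hj; push_neg at hj; exact hc (funext hj)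
  rw [lfg_dvd_iff c j hcj, resAlg_lfg c j hcj, lfg_eq_zero_iff] at hdvd
  refine ⟨v j * (c j)⁻¹, ?_⟩
  funext i
  by_cases hij : i = j
  · subst hij
    simp only [Pi.smul_apply, smul_eq_mul]
    field_simp
  · have h0 := congrFun hdvd ⟨i, hij⟩
    simp only [Pi.zero_apply] at h0
    have h1 : v i = v j * (c j)⁻¹ * c i := sub_eq_zero.mp h0
    simp [Pi.smul_apply, smul_eq_mul, h1]

lemma aeval_isHomogeneous {σ τ : Type*} (g : σ → MvPolynomial τ K)
    (hg : ∀ i, (g i).IsHomogeneous 1) {f : MvPolynomial σ K} {n : ℕ}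
    (hf : f.IsHomogeneous n) : (aeval g f).IsHomogeneous n := by
  conv_lhs => rw [f.as_sum]
  rw [map_sum]
  apply MvPolynomial.IsHomogeneous.sum
  intro d hd
  rw [aeval_monomial]
  have hdeg : (d.sum fun _ e => e) = n := by
    by_contra hne
    exact (mem_support_iff.mp hd) (hf.coeff_eq_zero (fun h' => hne (by rw [← h']; rfl)))
  have hprod : (d.prod fun i e => g i ^ e).IsHomogeneous n := by
    rw [Finsupp.prod, ← hdeg, Finsupp.sum]
    apply MvPolynomial.IsHomogeneous.prod
    intro i _
    simpa using (hg i).pow (d i)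
  rw [algebraMap_eq]
  exact hprod.C_mul _

lemma resAlg_isHomogeneous {σ : Type*} [Fintype σ] [DecidableEq σ] (c : σ → K) (j : σ)
    {f : MvPolynomial σ K} {n : ℕ} (hf : f.IsHomogeneous n) :
    ((resAlg c j) f).IsHomogeneous n := by
  apply aeval_isHomogeneous _ _ hf
  intro i
  by_cases hij : i ≠ j
  · simp only [dif_pos hij]
    exact MvPolynomial.isHomogeneous_X _ _
  · simp only [dif_neg hij]
    exact (lfg_isHomogeneous (K := K) (fun i' : {i : σ // i ≠ j} => c i'.1)).C_mul _

lemma homog_dvd_degree_lt {σ : Type*} {p q : MvPolynomial σ K} {D e : ℕ}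
    (hp : p.IsHomogeneous D) (hq : q.IsHomogeneous e) (hlt : e < D) (hdvd : p ∣ q) :
    q = 0 := by
  obtain ⟨r, rfl⟩ := hdvd
  ext d
  rw [coeff_zero]
  by_cases hde : d.degree = e
  · conv_lhs => rw [← MvPolynomial.sum_homogeneousComponent r]
    rw [Finset.mul_sum, coeff_sum]
    apply Finset.sum_eq_zero
    intro k _
    have hk : (p * homogeneousComponent k r).IsHomogeneous (D + k) :=
      hp.mul (homogeneousComponent_isHomogeneous k r)
    exact hk.coeff_eq_zero (by omega)
  · exact hq.coeff_eq_zero hde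

lemma prod_pow_primes_dvd {ι M : Type*} [CommMonoidWithZero M] [IsCancelMulZero M] (s : Finset ι)
    (p : ι → M) (e : ι → ℕ) (n : M)
    (hp : ∀ i ∈ s, Prime (p i))
    (hnd : ∀ i ∈ s, ∀ j ∈ s, i ≠ j → ¬ p i ∣ p j)
    (hdvd : ∀ i ∈ s, p i ^ e i ∣ n) :
    (∏ i ∈ s, p i ^ e i) ∣ n := by
  classical
  induction s using Finset.induction_on generalizing n with
  | empty => simpa using one_dvd n
  | @insert a s ha ih =>
      obtain ⟨n', rfl⟩ := hdvd a (Finset.mem_insert_self a s)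
      have hstep : ∀ i ∈ s, p i ^ e i ∣ n' := by
        intro i hi
        have hia : i ≠ a := fun hh => ha (hh ▸ hi)
        have h1 : p i ^ e i ∣ p a ^ e a * n' := hdvd i (Finset.mem_insert_of_mem hi)
        have h2 : ¬ p i ∣ p a ^ e a := fun hdd =>
          hnd i (Finset.mem_insert_of_mem hi) a (Finset.mem_insert_self a s) hia
            ((hp i (Finset.mem_insert_of_mem hi)).dvd_of_dvd_pow hdd)
        exact (hp i (Finset.mem_insert_of_mem hi)).pow_dvd_of_dvd_mul_left _ h2 h1
      rw [Finset.prod_insert ha]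
      exact mul_dvd_mul_left _
        (ih n' (fun i hi => hp i (Finset.mem_insert_of_mem hi))
          (fun i hi j hj hij => hnd i (Finset.mem_insert_of_mem hi) j
            (Finset.mem_insert_of_mem hj) hij) hstep)

end Aux

-- ARRANGEMENT LAYER --

section DerLayer
variable {K : Type*} [Field K] {ℓ : ℕ}

/-- The operator `θ(f) = ∑ θ_i ∂_i f`. -/
noncomputable def Dop (θ : Fin ℓ → MvS K ℓ) (f : MvS K ℓ) : MvS K ℓ :=
  ∑ i, θ i * pderiv i f

lemma mem_DerQ_iff {Q : MvS K ℓ} {θ : Fin ℓ → MvS K ℓ} : θ ∈ DerQ Q ↔ Q ∣ Dop θ Q :=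
  Iff.rfl

lemma Dop_mul (θ : Fin ℓ → MvS K ℓ) (f g : MvS K ℓ) :
    Dop θ (f * g) = f * Dop θ g + g * Dop θ f := by
  rw [Dop, Dop, Dop]
  simp only [pderiv_mul, mul_add, Finset.sum_add_distrib]
  rw [Finset.mul_sum, Finset.mul_sum, add_comm]
  congr 1 <;> exact Finset.sum_congr rfl (fun i _ => by ring)

lemma pderiv_linForm (i : Fin ℓ) (v : Fin ℓ → K) : pderiv i (linForm v) = C (v i) := by
  rw [linForm, map_sum]
  rw [Finset.sum_eq_single i]
  · simp [pderiv_C_mul]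
  · intro k _ hk
    simp [pderiv_C_mul, pderiv_X_of_ne hk]
  · simp

lemma Dop_linForm (θ : Fin ℓ → MvS K ℓ) (v : Fin ℓ → K) :
    Dop θ (linForm v) = ∑ i, θ i * C (v i) := by
  rw [Dop]
  exact Finset.sum_congr rfl (fun i _ => by rw [pderiv_linForm])

lemma Dop_prod (θ : Fin ℓ → MvS K ℓ) (B : Finset (Fin ℓ → K))
    [DecidableEq (Fin ℓ → K)] (F : (Fin ℓ → K) → MvS K ℓ) :
    Dop θ (∏ c ∈ B, F c) = ∑ c ∈ B, (∏ c' ∈ B.erase c, F c') * Dop θ (F c) := by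
  induction B using Finset.induction_on with
  | empty => simp [Dop]
  | @insert a s ha ih =>
      rw [Finset.prod_insert ha, Dop_mul, ih, Finset.sum_insert ha,
        Finset.erase_insert ha]
      rw [Finset.mul_sum]
      rw [add_comm]
      congr 1
      apply Finset.sum_congr rfl
      intro c hc
      have hca : c ≠ a := fun hh => ha (hh ▸ hc)
      rw [Finset.erase_insert_of_ne hca.symm ,
        Finset.prod_insert (fun hh => ha (Finset.mem_of_mem_erase hh))]
      ring

end DerLayer


section ArrLayer
variable {K : Type*} [Field K] {ℓ : ℕ}

lemma linForm_eq_lfg (c : Fin ℓ → K) : linForm c = lfg c := rfl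

lemma ellf_apply (c x : Fin ℓ → K) : ellf c x = ∑ i, c i * x i := by
  simp [ellf]

lemma ellf_single (c : Fin ℓ → K) (i : Fin ℓ) : ellf c (Pi.single i 1) = c i := by
  rw [ellf_apply]
  simp [Pi.single_apply, mul_ite, Finset.sum_ite_eq']

lemma mem_hypl {c x : Fin ℓ → K} : x ∈ hypl c ↔ ellf c x = 0 := by
  rw [hypl, LinearMap.mem_ker]

lemma ellf_comb (t s : K) (c h x : Fin ℓ → K) :
    ellf (t • c + s • h) x = t * ellf c x + s * ellf h x := by
  simp only [ellf_apply, Finset.mul_sum, ← Finset.sum_add_distrib]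
  exact Finset.sum_congr rfl (fun i _ => by simp [Pi.add_apply, Pi.smul_apply]; ring)

lemma hypl_inf_comb {c c' h : Fin ℓ → K} {t s : K} (ht : t ≠ 0)
    (hc : c' = t • c + s • h) : hypl c' ⊓ hypl h = hypl c ⊓ hypl h := by
  ext x
  simp only [Submodule.mem_inf, mem_hypl]
  constructor
  · rintro ⟨h1, h2⟩
    refine ⟨?_, h2⟩
    rw [hc, ellf_comb, h2, mul_zero, add_zero] at h1
    exact (mul_eq_zero.mp h1).resolve_left ht
  · rintro ⟨h1, h2⟩
    refine ⟨?_, h2⟩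
    rw [hc, ellf_comb, h1, h2]
    ring

lemma hypl_smul {c : Fin ℓ → K} {t : K} (ht : t ≠ 0) : hypl (t • c) = hypl c := by
  have h0 : hypl (0 : Fin ℓ → K) = ⊤ := by
    ext x; simp [mem_hypl, ellf_apply]
  have := hypl_inf_comb (c := c) (c' := t • c) (h := (0 : Fin ℓ → K)) (s := 0) ht
    (by rw [smul_zero, add_zero])
  rwa [h0, inf_top_eq, inf_top_eq] at this

lemma pencil {c c₀ h : Fin ℓ → K}
    (hX : hypl c ⊓ hypl h = hypl c₀ ⊓ hypl h) :
    ∃ a b : K, c = a • h + b • c₀ := by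
  have hker : (⨅ i : Fin 2, LinearMap.ker (![ellf h, ellf c₀] i)) ≤ LinearMap.ker (ellf c) := by
    intro x hx
    rw [Submodule.mem_iInf] at hx
    have h0 := hx 0
    have h1 := hx 1
    simp only [Matrix.cons_val_zero, Matrix.cons_val_one, Matrix.head_cons] at h0 h1
    have hx2 : x ∈ hypl c ⊓ hypl h := by
      rw [hX]; exact Submodule.mem_inf.mpr ⟨h1, h0⟩
    exact (Submodule.mem_inf.mp hx2).1
  have hsp := mem_span_of_iInf_ker_le_ker (𝕜 := K) hker
  obtain ⟨g, hg⟩ := (Submodule.mem_span_range_iff_exists_fun K).mp hsp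
  refine ⟨g 0, g 1, ?_⟩
  funext i
  have := congrFun (congrArg (DFunLike.coe) hg) (Pi.single i 1)
  simp only [Fin.sum_univ_two, Matrix.cons_val_zero, Matrix.cons_val_one, Matrix.head_cons,
    LinearMap.add_apply, LinearMap.smul_apply, smul_eq_mul, ellf_single] at this
  simp only [Pi.add_apply, Pi.smul_apply, smul_eq_mul]
  exact this.symm

end ArrLayer


section TeraoLayer
variable {K : Type*} [Field K] {ℓ : ℕ}

lemma lfg_comb (a b : K) (u w : Fin ℓ → K) :
    lfg (a • u + b • w) = C a * lfg u + C b * lfg w := by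
  rw [lfg, lfg, lfg, Finset.mul_sum, Finset.mul_sum, ← Finset.sum_add_distrib]
  apply Finset.sum_congr rfl
  intro i _
  simp only [Pi.add_apply, Pi.smul_apply, smul_eq_mul, C_add, C_mul]
  ring

lemma Dop_comb (θ : Fin ℓ → MvS K ℓ) (a b : K) (u w : Fin ℓ → K) :
    Dop θ (linForm (a • u + b • w))
      = C a * Dop θ (linForm u) + C b * Dop θ (linForm w) := by
  rw [Dop_linForm, Dop_linForm, Dop_linForm, Finset.mul_sum, Finset.mul_sum,
    ← Finset.sum_add_distrib]
  apply Finset.sum_congr rfl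
  intro i _
  simp only [Pi.add_apply, Pi.smul_apply, smul_eq_mul, C_add, C_mul]
  ring

lemma not_lfg_dvd_of_hypl_ne {c h : Fin ℓ → K} (hc0 : c ≠ 0)
    (hne : hypl c ≠ hypl h) : ¬ lfg h ∣ lfg c := by
  classical
  intro hdvd
  have hh0 : h ≠ 0 := by
    rintro rfl
    rw [show lfg (0 : Fin ℓ → K) = 0 by simp [lfg], zero_dvd_iff, lfg_eq_zero_iff] at hdvd
    exact hc0 hdvd
  obtain ⟨t, rfl⟩ := lfg_dvd_lfg hh0 hdvd
  have ht : t ≠ 0 := by rintro rfl; simp at hc0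
  exact hne (hypl_smul ht)

/-- The core fiber computation: the pencil trick. -/
lemma fiber_pow_dvd (h : Fin ℓ → K) (j : Fin ℓ) (hj : h j ≠ 0)
    (Fb : Finset (Fin ℓ → K)) (c₀ : Fin ℓ → K) (hc₀ : c₀ ∈ Fb)
    (P R : MvS K ℓ)
    (hnd : ¬ lfg h ∣ lfg c₀)
    (hdvd : ∀ c ∈ Fb, ∃ a b : K, b ≠ 0 ∧ linForm c = C a * linForm h + C b * linForm c₀
              ∧ linForm c ∣ C a * P + C b * R)
    (hprime : ∀ c ∈ Fb, Prime (linForm c))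
    (hpair : ∀ c ∈ Fb, ∀ c' ∈ Fb, c ≠ c' → ¬ linForm c ∣ linForm c') :
    (resAlg h j (lfg c₀)) ^ (Fb.card - 1) ∣ resAlg h j P := by
  classical
  set Θ : MvS K ℓ := linForm c₀ * P - linForm h * R with hΘdef
  have hΘ : ∀ c ∈ Fb, linForm c ∣ Θ := by
    intro c hc
    obtain ⟨a, b, hb, hcomb, hdc⟩ := hdvd c hc
    have e1 : C b * Θ = linForm c * P - linForm h * (C a * P + C b * R) := by
      rw [hΘdef, hcomb]; ring
    have e2 : linForm c ∣ C b * Θ := by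
      rw [e1]
      exact dvd_sub (dvd_mul_right _ _) ((hdc).mul_left _)
    have e3 : Θ = C b⁻¹ * (C b * Θ) := by
      rw [← mul_assoc, ← C_mul, inv_mul_cancel₀ hb, C_1, one_mul]
    rw [e3]
    exact e2.mul_left _
  have hprod : (∏ c ∈ Fb, linForm c) ∣ Θ := by
    have := prod_pow_primes_dvd Fb (fun c => linForm c) (fun _ => 1) Θ
      (fun c hc => hprime c hc)
      (fun c hc c' hc' hne => hpair c hc c' hc' hne)
      (fun c hc => by simpa using hΘ c hc)
    simpa using this
  obtain ⟨T, hT⟩ := hprod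
  -- apply the restriction map
  have hφΘ : resAlg h j Θ = resAlg h j (lfg c₀) * resAlg h j P := by
    rw [hΘdef]
    rw [map_sub, map_mul, map_mul, linForm_eq_lfg, linForm_eq_lfg,
      resAlg_lfg_self h j hj, zero_mul, sub_zero]
  have hφdvd : (resAlg h j (lfg c₀)) ^ Fb.card ∣ resAlg h j Θ := by
    rw [hT, map_mul, map_prod]
    apply Dvd.dvd.mul_right
    have : ∀ c ∈ Fb, resAlg h j (lfg c₀) ∣ resAlg h j (linForm c) := by
      intro c hc
      obtain ⟨a, b, hb, hcomb, -⟩ := hdvd c hc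
      rw [hcomb, map_add, map_mul, map_mul, linForm_eq_lfg h, resAlg_lfg_self h j hj,
        mul_zero, zero_add, linForm_eq_lfg]
      exact Dvd.dvd.mul_left dvd_rfl _
    calc (resAlg h j (lfg c₀)) ^ Fb.card = ∏ _c ∈ Fb, resAlg h j (lfg c₀) := by
          rw [Finset.prod_const, Finset.card_def]
      _ ∣ ∏ c ∈ Fb, resAlg h j (linForm c) := Finset.prod_dvd_prod_of_dvd _ _ this
  have hβ0 : resAlg h j (lfg c₀) ≠ 0 := fun h0 => hnd ((lfg_dvd_iff h j hj _).mpr h0)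
  rw [hφΘ] at hφdvd
  have hm : Fb.card = (Fb.card - 1) + 1 :=
    (Nat.succ_pred_eq_of_pos (Finset.card_pos.mpr ⟨c₀, hc₀⟩)).symm
  rw [hm, pow_succ, mul_comm ((resAlg h j (lfg c₀)) ^ (Fb.card - 1))] at hφdvd
  exact (mul_dvd_mul_iff_left hβ0).mp hφdvd

end TeraoLayer

section MainTerao
variable {K : Type*} [Field K] {ℓ : ℕ}

lemma step_A (A' : Finset (Fin ℓ → K)) (hA' : IsArrangement A')
    (θ : Fin ℓ → MvS K ℓ) (hθ : θ ∈ DerA A') :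
    ∀ c ∈ A', linForm c ∣ Dop θ (linForm c) := by
  classical
  intro c hc
  have hc0 : c ≠ 0 := hA'.1 c hc
  have hQ : Qpoly A' ∣ Dop θ (Qpoly A') := hθ
  rw [Qpoly, Dop_prod] at hQ
  have hcp : Prime (linForm c) := by rw [linForm_eq_lfg]; exact lfg_prime hc0
  have hpair : ∀ c' ∈ A', c ≠ c' → ¬ linForm c ∣ linForm c' := by
    intro c' hc' hne hdvd
    rw [linForm_eq_lfg, linForm_eq_lfg] at hdvd
    obtain ⟨t, rfl⟩ := lfg_dvd_lfg hc0 hdvd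
    have ht : t ≠ 0 := by rintro rfl; exact hA'.1 _ hc' (by simp)
    exact hne (hA'.2 c hc _ hc' (hypl_smul ht).symm)
  -- c divides the total sum
  have h1 : linForm c ∣ ∑ c' ∈ A', (∏ c'' ∈ A'.erase c', linForm c'') * Dop θ (linForm c') :=
    dvd_trans (Finset.dvd_prod_of_mem _ hc) hQ
  have h2 : linForm c ∣ ∑ c' ∈ A'.erase c,
      (∏ c'' ∈ A'.erase c', linForm c'') * Dop θ (linForm c') := by
    apply Finset.dvd_sum
    intro c' hc'
    apply Dvd.dvd.mul_right
    apply Finset.dvd_prod_of_mem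
    exact Finset.mem_erase.mpr ⟨(Finset.mem_erase.mp hc').1.symm, hc⟩
  have h3 : linForm c ∣ (∏ c'' ∈ A'.erase c, linForm c'') * Dop θ (linForm c) := by
    have hsplit := Finset.add_sum_erase A'
      (fun c' => (∏ c'' ∈ A'.erase c', linForm c'') * Dop θ (linForm c')) hc
    have : (∏ c'' ∈ A'.erase c, linForm c'') * Dop θ (linForm c)
        = (∑ c' ∈ A', (∏ c'' ∈ A'.erase c', linForm c'') * Dop θ (linForm c'))
          - ∑ c' ∈ A'.erase c, (∏ c'' ∈ A'.erase c', linForm c'') * Dop θ (linForm c') := by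
      rw [← hsplit]; ring
    rw [this]
    exact dvd_sub h1 h2
  rcases hcp.2.2 _ _ h3 with h4 | h4
  · exfalso
    obtain ⟨c', hc', hdvd⟩ := hcp.exists_mem_finset_dvd h4
    exact hpair c' (Finset.mem_of_mem_erase hc') (fun hh => (Finset.mem_erase.mp hc').1 hh.symm)
      hdvd
  · exact h4

theorem terao_dvd (A' : Finset (Fin ℓ → K)) (hA' : IsArrangement A')
    (h : Fin ℓ → K) (hh : NotInArr A' h)
    (θ : Fin ℓ → MvS K ℓ) (hθ : θ ∈ DerA A') {e : ℕ} (hom : IsHomog θ e)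
    (hlt : restrictCount A' h + e < A'.card) :
    linForm h ∣ Dop θ (linForm h) := by
  letI := Classical.decEq (Submodule K (Fin ℓ → K))
  letI := Classical.decEq (Fin ℓ → K)
  obtain ⟨j, hj⟩ : ∃ j, h j ≠ 0 := by
    by_contra hj; push_neg at hj; exact hh.1 (funext hj)
  set fn : (Fin ℓ → K) → Submodule K (Fin ℓ → K) := fun c => hypl c ⊓ hypl h with hfn
  set B := A'.image fn with hB
  have hBcard : B.card = restrictCount A' h := rfl
  set P := Dop θ (linForm h) with hP
  set φ := resAlg (K := K) h j with hφ
  -- fibers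
  set Fb : Submodule K (Fin ℓ → K) → Finset (Fin ℓ → K) :=
    fun X => A'.filter (fun c => fn c = X) with hFb
  have hrep : ∀ X ∈ B, ∃ c, c ∈ A' ∧ fn c = X := by
    intro X hX; exact Finset.mem_image.mp hX
  choose rep hrepA hrepf using hrep
  -- each φ(lfg c) for c ∈ A' is a nonzero prime
  have hkey : ∀ c ∈ A', φ (lfg c) ≠ 0 ∧ Prime (φ (lfg c)) := by
    intro c hc
    have hnd : ¬ lfg h ∣ lfg c := not_lfg_dvd_of_hypl_ne (hA'.1 c hc) (hh.2 c hc)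
    have hne0 : φ (lfg c) ≠ 0 := fun h0 => hnd ((lfg_dvd_iff h j hj _).mpr h0)
    refine ⟨hne0, ?_⟩
    rw [hφ, resAlg_lfg h j hj] at hne0 ⊢
    apply lfg_prime
    intro hv
    exact hne0 (by rw [hv]; simp [lfg])
  have hh0 : h ≠ 0 := hh.1
  -- pairwise non-divisibility of the fiber primes
  have hpairX : ∀ (X X' : {x // x ∈ B}), X ≠ X' →
      ¬ φ (lfg (rep X.1 X.2)) ∣ φ (lfg (rep X'.1 X'.2)) := by
    intro X X' hne hdvd
    set c := rep X.1 X.2 with hcdef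
    set c' := rep X'.1 X'.2 with hc'def
    have hcA : c ∈ A' := hrepA _ _
    have hc'A : c' ∈ A' := hrepA _ _
    have h1 := hdvd
    rw [hφ, resAlg_lfg h j hj, resAlg_lfg h j hj] at h1
    have hw0 : (fun i' : {i : Fin ℓ // i ≠ j} => c i'.1 - c j * (h j)⁻¹ * h i'.1) ≠ 0 := by
      intro hv
      exact (hkey c hcA).1 (by rw [hφ, resAlg_lfg h j hj, hv]; simp [lfg])
    obtain ⟨t, hts⟩ := lfg_dvd_lfg hw0 h1
    have ht0 : t ≠ 0 := by
      rintro rfl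
      apply (hkey c' hc'A).1
      rw [hφ, resAlg_lfg h j hj]
      rw [zero_smul] at hts
      rw [hts]
      simp [lfg]
    have h2 : lfg h ∣ lfg (c' - t • c) := by
      rw [lfg_dvd_iff h j hj, lfg_smul_sub, map_sub, map_mul, resAlg_C,
        resAlg_lfg h j hj, resAlg_lfg h j hj, ← lfg_smul_sub, hts]
      rw [sub_self]
      simp [lfg]
    obtain ⟨u, hu⟩ := lfg_dvd_lfg hh0 h2
    have hc'eq : c' = t • c + u • h := by
      have : c' - t • c = u • h := hu
      funext i
      have := congrFun this i
      simp only [Pi.sub_apply, Pi.smul_apply, smul_eq_mul, Pi.add_apply] at this ⊢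
      linear_combination this
    have hXeq : X'.1 = X.1 := by
      rw [← hrepf X'.1 X'.2, ← hrepf X.1 X.2, ← hc'def, ← hcdef, hfn]
      exact hypl_inf_comb ht0 hc'eq
    exact hne (Subtype.ext hXeq.symm)
  -- per-fiber power divisibility
  have hperX : ∀ X : {x // x ∈ B}, (φ (lfg (rep X.1 X.2))) ^ ((Fb X.1).card - 1) ∣ φ P := by
    intro X
    set c₀ := rep X.1 X.2 with hc₀def
    have hc₀A : c₀ ∈ A' := hrepA _ _
    have hc₀Fb : c₀ ∈ Fb X.1 := Finset.mem_filter.mpr ⟨hc₀A, hrepf _ _⟩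
    refine fiber_pow_dvd h j hj (Fb X.1) c₀ hc₀Fb P (Dop θ (linForm c₀))
      (not_lfg_dvd_of_hypl_ne (hA'.1 _ hc₀A) (hh.2 _ hc₀A)) ?_ ?_ ?_
    · intro c hc
      obtain ⟨hcA, hcfn⟩ := Finset.mem_filter.mp hc
      have hXeq : hypl c ⊓ hypl h = hypl c₀ ⊓ hypl h := by
        have h5 : fn c = fn c₀ := by rw [hcfn, hrepf]
        rw [hfn] at h5; exact h5
      obtain ⟨a, b, hab⟩ := pencil hXeq
      have hb : b ≠ 0 := by
        rintro rfl
        rw [zero_smul, add_zero] at hab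
        have ha0 : a ≠ 0 := by
          rintro rfl; rw [zero_smul] at hab; exact hA'.1 c hcA hab
        exact hh.2 c hcA (by rw [hab]; exact hypl_smul ha0)
      refine ⟨a, b, hb, ?_, ?_⟩
      · rw [hab, linForm_eq_lfg, linForm_eq_lfg, linForm_eq_lfg, lfg_comb]
      · have hstep := step_A A' hA' θ hθ c hcA
        have h5 : Dop θ (linForm c) = C a * P + C b * (Dop θ (linForm c₀)) := by
          rw [hab, Dop_comb]
        rwa [h5] at hstep
    · intro c hc
      rw [linForm_eq_lfg]
      exact lfg_prime (hA'.1 c (Finset.mem_filter.mp hc).1)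
    · intro c hc c'' hc'' hne hdvd
      have hcA := (Finset.mem_filter.mp hc).1
      have hc''A := (Finset.mem_filter.mp hc'').1
      rw [linForm_eq_lfg, linForm_eq_lfg] at hdvd
      obtain ⟨t, rfl⟩ := lfg_dvd_lfg (hA'.1 c hcA) hdvd
      have ht : t ≠ 0 := by rintro rfl; exact hA'.1 _ hc''A (by simp)
      exact hne (hA'.2 c hcA _ hc''A (hypl_smul ht).symm)
  -- global product divisibility
  have hproddvd : (∏ X ∈ B.attach, (φ (lfg (rep X.1 X.2))) ^ ((Fb X.1).card - 1)) ∣ φ P :=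
    prod_pow_primes_dvd B.attach _ _ _
      (fun X _ => (hkey _ (hrepA X.1 X.2)).2)
      (fun X _ X' _ hne => hpairX X X' hne)
      (fun X _ => hperX X)
  -- homogeneity bookkeeping
  have hprodhom : (∏ X ∈ B.attach, (φ (lfg (rep X.1 X.2))) ^ ((Fb X.1).card - 1)).IsHomogeneous
      (∑ X ∈ B.attach, ((Fb X.1).card - 1)) := by
    apply MvPolynomial.IsHomogeneous.prod
    intro X _
    have h1 : (φ (lfg (rep X.1 X.2))).IsHomogeneous 1 := by
      rw [hφ, resAlg_lfg h j hj]; exact lfg_isHomogeneous _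
    simpa using h1.pow _
  have hPhom : P.IsHomogeneous e := by
    rw [hP, Dop_linForm]
    apply MvPolynomial.IsHomogeneous.sum
    intro i _
    rw [mul_comm]
    exact (hom i).C_mul _
  have hφPhom : (φ P).IsHomogeneous e := by
    rw [hφ]
    exact resAlg_isHomogeneous h j hPhom
  -- degree count
  have hsum : (∑ X ∈ B.attach, ((Fb X.1).card - 1)) + B.card = A'.card := by
    have h1 : ∀ X : {x // x ∈ B}, 1 ≤ (Fb X.1).card := fun X =>
      Finset.card_pos.mpr ⟨rep X.1 X.2, Finset.mem_filter.mpr ⟨hrepA _ _, hrepf _ _⟩⟩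
    have h2 : ∑ X ∈ B.attach, (Fb X.1).card = A'.card := by
      rw [Finset.sum_attach B (fun X => (Fb X).card)]
      exact (Finset.card_eq_sum_card_image fn A').symm
    calc (∑ X ∈ B.attach, ((Fb X.1).card - 1)) + B.card
        = ∑ X ∈ B.attach, (((Fb X.1).card - 1) + 1) := by
          rw [Finset.sum_add_distrib, Finset.sum_const, Finset.card_attach, smul_eq_mul, mul_one]
      _ = ∑ X ∈ B.attach, (Fb X.1).card :=
          Finset.sum_congr rfl (fun X _ => Nat.succ_pred_eq_of_pos (h1 X))
      _ = A'.card := h2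
  have hlt2 : e < ∑ X ∈ B.attach, ((Fb X.1).card - 1) := by omega
  have hφP0 : φ P = 0 := homog_dvd_degree_lt hprodhom hφPhom hlt2 hproddvd
  have hfin : lfg h ∣ P := (lfg_dvd_iff h j hj P).mpr hφP0
  rw [linForm_eq_lfg]
  exact hfin

end MainTerao

/-- if `|A^H| ≤ |A'| - d` (for a positive `d`) then every set of homogeneous
generators of `D(A')` contains an element of degree at least `d`. -/
theorem stmt0 {K : Type*} [Field K] [CharZero K] {ℓ : ℕ}
    (A' : Finset (Fin ℓ → K)) (hA' : IsArrangement A')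
    (h : Fin ℓ → K) (hh : NotInArr A' h)
    (d : ℕ) (hd : 0 < d)
    (hres : restrictCount A' h + d ≤ A'.card)
    (G : Set (Fin ℓ → MvS K ℓ)) (hGen : Generates A' G) (hhom : HomogGens G) :
    ∃ θ ∈ G, ∃ e, d ≤ e ∧ IsHomog θ e := by
  classical
  by_contra hcon
  push_neg at hcon
  obtain ⟨j, hj⟩ : ∃ j, h j ≠ 0 := by
    by_contra hj; push_neg at hj; exact hh.1 (funext hj)
  -- the submodule of derivations θ with α_H ∣ θ(α_H)
  let L : (Fin ℓ → MvS K ℓ) →ₗ[MvS K ℓ] MvS K ℓ :=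
    { toFun := fun θ => ∑ i, θ i * C (h i)
      map_add' := by
        intro a b
        simp only [Pi.add_apply, add_mul, Finset.sum_add_distrib]
      map_smul' := by
        intro m a
        simp only [Pi.smul_apply, smul_eq_mul, RingHom.id_apply, Finset.mul_sum, mul_assoc] }
  let M : Submodule (MvS K ℓ) (Fin ℓ → MvS K ℓ) :=
    Submodule.comap L (Ideal.span {linForm h})
  have hGM : G ⊆ M := by
    intro θ hθG
    obtain ⟨hne, e, he⟩ := hhom θ hθG
    have helt : e < d := by
      by_contra hge
      exact hcon θ hθG e (le_of_not_gt hge) he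
    have hT := terao_dvd A' hA' h hh θ (hGen.1 θ hθG) he (by omega)
    rw [Dop_linForm] at hT
    simp only [SetLike.mem_coe, M, Submodule.mem_comap, Ideal.mem_span_singleton, L,
      LinearMap.coe_mk, AddHom.coe_mk]
    exact hT
  have hspan : Submodule.span (MvS K ℓ) G ≤ M := Submodule.span_le.mpr hGM
  -- the derivation Q·∂_j
  set θs : Fin ℓ → MvS K ℓ := fun i => if i = j then Qpoly A' else 0 with hθs
  have hsingle : ∀ (F : Fin ℓ → MvS K ℓ), ∑ i, θs i * F i = Qpoly A' * F j := by
    intro F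
    rw [Finset.sum_eq_single j]
    · rw [hθs]; simp
    · intro k _ hk
      rw [hθs]; simp [hk]
    · intro hj'; exact absurd (Finset.mem_univ j) hj'
  have hθsD : θs ∈ DerA A' := by
    show Qpoly A' ∣ ∑ i, θs i * pderiv i (Qpoly A')
    rw [hsingle]
    exact dvd_mul_right _ _
  have hθsM : θs ∈ M := hspan (hGen.2 θs hθsD)
  have hdvd1 : linForm h ∣ Qpoly A' * C (h j) := by
    have := hθsM
    simp only [M, Submodule.mem_comap, Ideal.mem_span_singleton, L, LinearMap.coe_mk,
      AddHom.coe_mk] at this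
    rwa [hsingle (fun i => C (h i))] at this
  have hdvdQ : linForm h ∣ Qpoly A' := by
    have hQeq : Qpoly A' = Qpoly A' * C (h j) * C (h j)⁻¹ := by
      rw [mul_assoc, ← C_mul, mul_inv_cancel₀ hj, C_1, mul_one]
    rw [hQeq]
    exact hdvd1.mul_right _
  have hprime : Prime (linForm h) := by
    rw [linForm_eq_lfg]; exact lfg_prime hh.1
  obtain ⟨c, hcA, hdvdc⟩ := hprime.exists_mem_finset_dvd hdvdQ
  rw [linForm_eq_lfg, linForm_eq_lfg] at hdvdc
  obtain ⟨t, rfl⟩ := lfg_dvd_lfg hh.1 hdvdc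
  have ht : t ≠ 0 := by rintro rfl; exact hA'.1 _ hcA (by simp)
  exact hh.2 _ hcA (hypl_smul ht)
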